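/- The total mass ∑_{i∈ℤ} U^t_i of a finitely supported solution of the udKdV update rule is independent of t. -/

import Mathlib

open Function Set

private lemma stmt4_step (U : ℤ → ℤ → ℝ)
    (hfin : ∀ t, (Function.support (U t)).Finite)
    (hup : ∀ t i, U (t + 1) i =
      min (1 - U t i) (∑ᶠ j ∈ Set.Iio i, (U t j - U (t + 1) j)))
    (t : ℤ) : ∑ᶠ i, U (t + 1) i = ∑ᶠ i, U t i := by
  set f : ℤ → ℝ := fun j => U t j - U (t + 1) j with hf
  have hsub : support f ⊆ support (U t) ∪ support (U (t + 1)) := by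
    intro j hj
    by_contra h
    simp only [mem_union, mem_support, not_or, not_not] at h
    apply hj
    simp [hf, h.1, h.2]
  have hufin : (support (U t) ∪ support (U (t + 1))).Finite :=
    (hfin t).union (hfin (t + 1))
  obtain ⟨b, hb⟩ := hufin.bddAbove
  set i : ℤ := b + 1 with hi
  have hout : ∀ j, i ≤ j → U t j = 0 ∧ U (t + 1) j = 0 := by
    intro j hj
    constructor <;> by_contra h
    · exact absurd (hb (Or.inl h)) (by omega)
    · exact absurd (hb (Or.inr h)) (by omega)
  have hsupp : support f ⊆ Set.Iio i := by
    intro j hj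
    by_contra h
    obtain ⟨h1, h2⟩ := hout j (by simpa [Set.mem_Iio, not_lt] using h)
    exact hj (by simp [hf, h1, h2])
  have hS : (∑ᶠ j ∈ Set.Iio i, f j) = ∑ᶠ j, f j := by
    rw [← finsum_mem_univ f]
    exact finsum_mem_inter_support_eq f _ _ (by
      rw [Set.univ_inter, Set.inter_eq_right.mpr hsupp])
  have hUi := hup t i
  obtain ⟨h1, h2⟩ := hout i le_rfl
  rw [h1, h2, hS, sub_zero] at hUi
  have hS0 : (∑ᶠ j, f j) = 0 := by
    rw [min_def] at hUi
    split_ifs at hUi <;> linarith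
  have hdiff : (∑ᶠ j, f j) = (∑ᶠ j, U t j) - ∑ᶠ j, U (t + 1) j :=
    finsum_sub_distrib (hfin t) (hfin (t + 1))
  rw [hdiff] at hS0
  linarith

/-- The total mass `∑_{i∈ℤ} U^t_i` of a finitely supported
solution of the udKdV update rule is independent of `t`. -/
theorem stmt_4 (U : ℤ → ℤ → ℝ)
    (hfin : ∀ t, (Function.support (U t)).Finite)
    (hup : ∀ t i, U (t + 1) i =
      min (1 - U t i) (∑ᶠ j ∈ Set.Iio i, (U t j - U (t + 1) j))) :
    ∀ s t : ℤ, ∑ᶠ i, U s i = ∑ᶠ i, U t i := by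
  have key : ∀ t : ℤ, ∑ᶠ i, U t i = ∑ᶠ i, U 0 i := by
    intro t
    induction t using Int.induction_on with
    | zero => rfl
    | succ n ih => rw [stmt4_step U hfin hup n, ih]
    | pred n ih =>
      have := stmt4_step U hfin hup (-(n : ℤ) - 1)
      rw [show (-(n : ℤ) - 1 + 1) = -n by ring] at this
      rw [← this]
      exact ih
  intro s t; rw [key s, key t]
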